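/- Let G = (V, E) be an undirected graph and A ⊆ V. Define the induced graph G_A on vertex set A by eliminating (in any order) all vertices of V \ A, where eliminating a vertex s adds edges between all pairs of neighbors of s and then deletes s. Then for i, j ∈ A with i ≠ j, the edge (i, j) exists in G_A if and only if either (i, j) ∈ E, or i and j are path connected with respect to V \ A (i.e., there is a path from i to j in G with at least one interior vertex, all interior vertices lying in V \ A). -/

import Mathlib

/-- Path connectivity with respect to `V \ A`. -/
def RelPathConn {V : Type*} (G : SimpleGraph V) (A : Set V) (i j : V) : Prop :=
  ∃ w : G.Walk i j, w.IsPath ∧ w.support.tail.dropLast ≠ [] ∧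
    ∀ v ∈ w.support.tail.dropLast, v ∉ A

/-- Eliminating a single vertex `s`: keep all edges not incident to `s`, add all
pairs of distinct neighbours of `s`, and isolate (remove) `s`. -/
def elimGraph {V : Type*} (G : SimpleGraph V) (s : V) : SimpleGraph V where
  Adj u v := u ≠ v ∧ ((G.Adj u v ∧ u ≠ s ∧ v ≠ s) ∨ (G.Adj u s ∧ G.Adj v s))
  symm := by
    constructor
    rintro u v ⟨h1, h2 | h3⟩
    · exact ⟨h1.symm, Or.inl ⟨h2.1.symm, h2.2.2, h2.2.1⟩⟩
    · exact ⟨h1.symm, Or.inr ⟨h3.2, h3.1⟩⟩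
  loopless := by constructor; rintro u ⟨h, -⟩; exact h rfl

/-- Successively eliminating the vertices in the list `l`. -/
def elimAll {V : Type*} (G : SimpleGraph V) (l : List V) : SimpleGraph V :=
  l.foldl elimGraph G

namespace ElimAux

variable {V : Type*}

/-- The support of a walk ending at `j` is its `dropLast` with `j` appended. -/
lemma support_dropLast_concat {G : SimpleGraph V} {b j : V} (w : G.Walk b j) :
    w.support.dropLast ++ [j] = w.support := by
  induction w with
  | nil => simp
  | cons h p ih =>
    rw [SimpleGraph.Walk.support_cons,
      List.dropLast_cons_of_ne_nil p.support_ne_nil, List.cons_append, ih]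

lemma support_tail_eq {G : SimpleGraph V} {i j : V} (w : G.Walk i j) (hne : i ≠ j) :
    w.support.tail.dropLast ++ [j] = w.support.tail := by
  cases w with
  | nil => exact absurd rfl hne
  | cons h p => simpa using support_dropLast_concat p

lemma mem_support_of_mem_interior {G : SimpleGraph V} {i j : V} {w : G.Walk i j} {v : V}
    (h : v ∈ w.support.tail.dropLast) : v ∈ w.support :=
  List.mem_of_mem_tail (List.dropLast_subset _ h)

/-- A support vertex distinct from both endpoints lies in the interior. -/
lemma mem_interior {G : SimpleGraph V} {i j : V} (hne : i ≠ j) {w : G.Walk i j} {v : V}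
    (hv : v ∈ w.support) (hvi : v ≠ i) (hvj : v ≠ j) : v ∈ w.support.tail.dropLast := by
  rw [w.support_eq_cons] at hv
  rcases List.mem_cons.mp hv with rfl | hv
  · exact absurd rfl hvi
  · rw [← support_tail_eq w hne] at hv
    rcases List.mem_append.mp hv with h | h
    · exact h
    · simp at h; exact absurd h hvj

/-- For a path, the endpoints are not in the interior. -/
lemma endpoints_not_mem_interior {G : SimpleGraph V} {i j : V} (hne : i ≠ j)
    {w : G.Walk i j} (hw : w.IsPath) :
    i ∉ w.support.tail.dropLast ∧ j ∉ w.support.tail.dropLast := by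
  have hnd : w.support.Nodup := hw.support_nodup
  rw [w.support_eq_cons] at hnd
  constructor
  · intro h
    exact (List.nodup_cons.mp hnd).1 (List.mem_of_mem_dropLast h)
  · intro h
    have h2 : w.support.tail.Nodup := (List.nodup_cons.mp hnd).2
    rw [← support_tail_eq w hne] at h2
    rcases List.nodup_append'.mp h2 with ⟨-, -, hdisj⟩
    exact hdisj h (by simp)

/-- Translate a walk in `elimGraph G s` into a walk in `G` (possibly inserting `s`). -/
lemma exists_walk_of_elim {G : SimpleGraph V} {s : V} {u v : V}
    (w : (elimGraph G s).Walk u v) :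
    ∃ w' : G.Walk u v, ∀ x ∈ w'.support, x ∈ w.support ∨ x = s := by
  induction w with
  | nil => exact ⟨SimpleGraph.Walk.nil, by simp⟩
  | @cons u b v h p ih =>
    obtain ⟨w', hw'⟩ := ih
    rcases h with ⟨hne, hG | ⟨hus, hbs⟩⟩
    · refine ⟨SimpleGraph.Walk.cons hG.1 w', ?_⟩
      intro x hx
      rcases List.mem_cons.mp (by simpa using hx) with rfl | hx
      · simp
      · rcases hw' x hx with h | h
        · left; exact List.mem_cons_of_mem _ h
        · right; exact h
    · refine ⟨SimpleGraph.Walk.cons hus (SimpleGraph.Walk.cons hbs.symm w'), ?_⟩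
      intro x hx
      simp only [SimpleGraph.Walk.support_cons, List.mem_cons] at hx
      rcases hx with rfl | rfl | hx
      · left; simp
      · right; rfl
      · rcases hw' x hx with h | h
        · left; exact List.mem_cons_of_mem _ h
        · right; exact h

/-- Translate a walk in `G` avoiding `s` at its endpoints into a walk in
`elimGraph G s` (removing `s` from the interior). -/
lemma exists_elim_walk {G : SimpleGraph V} {s : V} :
    ∀ (n : ℕ) {u v : V} (w : G.Walk u v), w.length ≤ n → u ≠ s → v ≠ s →
      ∃ w' : (elimGraph G s).Walk u v, ∀ x ∈ w'.support, x ∈ w.support ∧ x ≠ s := by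
  intro n
  induction n with
  | zero =>
    intro u v w hw hu hv
    cases w with
    | nil => exact ⟨SimpleGraph.Walk.nil, by simpa using hu⟩
    | cons h p => simp [SimpleGraph.Walk.length_cons] at hw
  | succ n ih =>
    intro u v w hw hu hv
    cases w with
    | nil => exact ⟨SimpleGraph.Walk.nil, by simpa using hu⟩
    | @cons _ b _ h p =>
      by_cases hb : b = s
      · subst hb
        cases p with
        | nil => exact absurd rfl hv
        | @cons _ c v h2 q =>
          have hc : c ≠ b := fun hcs => G.loopless.irrefl _ (hcs ▸ h2)
          have hlen : q.length ≤ n := by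
            simp only [SimpleGraph.Walk.length_cons] at hw; omega
          by_cases hcu : c = u
          · subst hcu
            obtain ⟨w', hw'⟩ := ih q hlen hu hv
            refine ⟨w', fun x hx => ⟨?_, (hw' x hx).2⟩⟩
            have := (hw' x hx).1
            simp only [SimpleGraph.Walk.support_cons, List.mem_cons]
            tauto
          · obtain ⟨w', hw'⟩ := ih q hlen hc hv
            refine ⟨SimpleGraph.Walk.cons ⟨fun h' => hcu h'.symm, Or.inr ⟨h, h2.symm⟩⟩ w',
              ?_⟩
            intro x hx
            rcases List.mem_cons.mp hx with rfl | hx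
            · exact ⟨by simp, hu⟩
            · refine ⟨?_, (hw' x hx).2⟩
              have := (hw' x hx).1
              simp only [SimpleGraph.Walk.support_cons, List.mem_cons]
              tauto
      · have hlen : p.length ≤ n := by
          simp only [SimpleGraph.Walk.length_cons] at hw; omega
        obtain ⟨w', hw'⟩ := ih p hlen hb hv
        refine ⟨SimpleGraph.Walk.cons ⟨G.ne_of_adj h, Or.inl ⟨h, hu, hb⟩⟩ w', ?_⟩
        intro x hx
        rcases List.mem_cons.mp hx with rfl | hx
        · exact ⟨by simp, hu⟩
        · refine ⟨?_, (hw' x hx).2⟩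
          have := (hw' x hx).1
          simp only [SimpleGraph.Walk.support_cons, List.mem_cons]
          tauto

/-- The key invariant: adjacency in `elimAll G l` is equivalent to the existence of a
walk in `G` whose support lies in `{i, j} ∪ l`. -/
lemma elimAll_adj_iff_walk :
    ∀ (l : List V) (G : SimpleGraph V) {i j : V}, i ≠ j → i ∉ l → j ∉ l →
      ((elimAll G l).Adj i j ↔
        ∃ w : G.Walk i j, ∀ v ∈ w.support, v = i ∨ v = j ∨ v ∈ l) := by
  intro l
  induction l with
  | nil =>
    intro G i j hij hi hj
    simp only [elimAll, List.foldl_nil]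
    constructor
    · intro h
      exact ⟨SimpleGraph.Walk.cons h SimpleGraph.Walk.nil, by intro v hv; simp at hv; tauto⟩
    · rintro ⟨w, hw⟩
      cases w with
      | nil => exact absurd rfl hij
      | @cons _ b _ h p =>
        have hb : b = i ∨ b = j ∨ b ∈ ([] : List V) :=
          hw b (by simp [SimpleGraph.Walk.support_cons, p.start_mem_support])
        rcases hb with rfl | rfl | hb
        · exact absurd h (G.loopless.irrefl _)
        · exact h
        · simp at hb
  | cons s l' ih =>
    intro G i j hij hi hj
    have his : i ≠ s := fun h => hi (h ▸ (List.mem_cons_self : s ∈ s :: l'))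
    have hjs : j ≠ s := fun h => hj (h ▸ (List.mem_cons_self : s ∈ s :: l'))
    have hi' : i ∉ l' := fun h => hi (List.mem_cons_of_mem _ h)
    have hj' : j ∉ l' := fun h => hj (List.mem_cons_of_mem _ h)
    have : elimAll G (s :: l') = elimAll (elimGraph G s) l' := rfl
    rw [this, ih (elimGraph G s) hij hi' hj']
    constructor
    · rintro ⟨w, hw⟩
      obtain ⟨w', hw'⟩ := exists_walk_of_elim w
      refine ⟨w', fun x hx => ?_⟩
      rcases hw' x hx with hx' | rfl
      · rcases hw x hx' with h | h | h
        · tauto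
        · tauto
        · exact Or.inr (Or.inr (List.mem_cons_of_mem _ h))
      · exact Or.inr (Or.inr (by simp))
    · rintro ⟨w, hw⟩
      obtain ⟨w', hw'⟩ := exists_elim_walk w.length w le_rfl his hjs
      refine ⟨w', fun x hx => ?_⟩
      obtain ⟨hxw, hxs⟩ := hw' x hx
      rcases hw x hxw with h | h | h
      · tauto
      · tauto
      · rcases List.mem_cons.mp h with rfl | h
        · exact absurd rfl hxs
        · tauto

/-- A walk with empty interior between distinct vertices witnesses an edge. -/
lemma adj_of_interior_nil {G : SimpleGraph V} {i j : V} (hij : i ≠ j) (w : G.Walk i j)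
    (h : w.support.tail.dropLast = []) : G.Adj i j := by
  cases w with
  | nil => exact absurd rfl hij
  | @cons _ b _ hadj p =>
    have : p.support = [j] := by
      have := support_dropLast_concat p
      simp only [SimpleGraph.Walk.support_cons, List.tail_cons] at h
      rw [h] at this
      simpa using this.symm
    have hb : b = j := by
      have hbmem := p.start_mem_support
      rw [this] at hbmem
      simpa using hbmem
    exact hb ▸ hadj

end ElimAux

/-- The induced graph `G_A`, obtained by eliminating the vertices of `V \ A` in any
order, has an edge between distinct `i, j ∈ A` if and only if `(i, j) ∈ E` or `i` and
`j` are path connected with respect to `V \ A`.  (In particular the result is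
independent of the elimination order.) -/
theorem elimAll_adj_iff {V : Type*} [Fintype V] (G : SimpleGraph V) (A : Set V)
    (l : List V) (hnd : l.Nodup) (hl : ∀ v, v ∈ l ↔ v ∉ A)
    (i j : V) (hi : i ∈ A) (hj : j ∈ A) (hij : i ≠ j) :
    (elimAll G l).Adj i j ↔ G.Adj i j ∨ RelPathConn G A i j := by
  classical
  have hil : i ∉ l := fun h => (hl i).mp h hi
  have hjl : j ∉ l := fun h => (hl j).mp h hj
  rw [ElimAux.elimAll_adj_iff_walk l G hij hil hjl]
  constructor
  · rintro ⟨w, hw⟩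
    have hp : w.bypass.IsPath := w.bypass_isPath
    have hsub : ∀ v ∈ w.bypass.support, v = i ∨ v = j ∨ v ∈ l := fun v hv =>
      hw v (w.support_bypass_subset hv)
    by_cases hint : w.bypass.support.tail.dropLast = []
    · exact Or.inl (ElimAux.adj_of_interior_nil hij w.bypass hint)
    · refine Or.inr ⟨w.bypass, hp, hint, fun v hv => ?_⟩
      have hvs : v ∈ w.bypass.support := ElimAux.mem_support_of_mem_interior hv
      have hvi : v ≠ i := fun h => (ElimAux.endpoints_not_mem_interior hij hp).1 (h ▸ hv)
      have hvj : v ≠ j := fun h => (ElimAux.endpoints_not_mem_interior hij hp).2 (h ▸ hv)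
      rcases hsub v hvs with rfl | rfl | h
      · exact absurd rfl hvi
      · exact absurd rfl hvj
      · exact (hl v).mp h
  · rintro (h | ⟨w, hw, hne, hint⟩)
    · exact ⟨SimpleGraph.Walk.cons h SimpleGraph.Walk.nil, by intro v hv; simp at hv; tauto⟩
    · refine ⟨w, fun v hv => ?_⟩
      by_cases hvi : v = i
      · exact Or.inl hvi
      by_cases hvj : v = j
      · exact Or.inr (Or.inl hvj)
      have : v ∈ w.support.tail.dropLast := ElimAux.mem_interior hij hv hvi hvj
      exact Or.inr (Or.inr ((hl v).mpr (hint v this)))
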